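/- arXiv:2504.16016 — 4 statements merged into one kernel-verified Lean document; each statement's English description precedes it below -/
import Mathlib

section
/- Let E be a finite-dimensional real inner product space and let F, G ∈ E be nonzero vectors. Then the gradient of the map F ↦ Sim(F, G) at F satisfies the norm bound ‖∇_F Sim(F, G)‖ ≤ 2/‖F‖. -/
open scoped InnerProductSpace

/-- For nonzero `F, G` in a finite-dimensional real inner product space,
the gradient of the cosine-similarity map `F ↦ ⟪F, G⟫ / (‖F‖ * ‖G‖)` at `F` has norm
at most `2 / ‖F‖`. -/
theorem stmt_1 {E : Type*} [NormedAddCommGroup E] [InnerProductSpace ℝ E]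
    [FiniteDimensional ℝ E] (F G : E) (hF : F ≠ 0) (hG : G ≠ 0) :
    ‖gradient (fun v : E => ⟪v, G⟫_ℝ / (‖v‖ * ‖G‖)) F‖ ≤ 2 / ‖F‖ := by
  have hFn : ‖F‖ ≠ 0 := norm_ne_zero_iff.mpr hF
  have hGn : ‖G‖ ≠ 0 := norm_ne_zero_iff.mpr hG
  have hFp : (0:ℝ) < ‖F‖ := norm_pos_iff.mpr hF
  have hGp : (0:ℝ) < ‖G‖ := norm_pos_iff.mpr hG
  have h1 : HasFDerivAt (fun v : E => ⟪v, G⟫_ℝ) (innerSL ℝ G) F := by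
    have h := (innerSL ℝ G).hasFDerivAt (x := F)
    simpa [real_inner_comm] using h
  have hs : HasDerivAt Real.sqrt (1 / (2 * Real.sqrt ⟪F, F⟫_ℝ)) ⟪F, F⟫_ℝ :=
    Real.hasDerivAt_sqrt (by simpa [real_inner_self_eq_norm_sq] using pow_ne_zero 2 hFn)
  have hi : HasFDerivAt (fun v : E => ⟪v, v⟫_ℝ) ((2 : ℝ) • innerSL ℝ F) F := by
    have h := (hasFDerivAt_id F).inner ℝ (hasFDerivAt_id F)
    refine h.congr_fderiv ?_
    ext w
    simp [real_inner_comm]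
    ring
  have h2 : HasFDerivAt (fun v : E => ‖v‖) ((‖F‖)⁻¹ • innerSL ℝ F) F := by
    have h := HasDerivAt.comp_hasFDerivAt (f := fun v : E => ⟪v, v⟫_ℝ) F hs hi
    have hn : (fun v : E => Real.sqrt ⟪v, v⟫_ℝ) = fun v : E => ‖v‖ := by
      funext v; rw [real_inner_self_eq_norm_sq]; exact Real.sqrt_sq (norm_nonneg v)
    simp only [Function.comp_def] at h
    rw [hn] at h
    refine h.congr_fderiv ?_
    ext w
    have hq : Real.sqrt ⟪F, F⟫_ℝ = ‖F‖ := by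
      rw [real_inner_self_eq_norm_sq]; exact Real.sqrt_sq (norm_nonneg F)
    simp [hq]
    ring
  have h3 : HasFDerivAt (fun v : E => ‖v‖ * ‖G‖) (‖G‖ • ((‖F‖)⁻¹ • innerSL ℝ F)) F :=
    h2.mul_const ‖G‖
  have hne : ‖F‖ * ‖G‖ ≠ 0 := mul_ne_zero hFn hGn
  have hinv : HasDerivAt (fun t : ℝ => t⁻¹) (-((‖F‖ * ‖G‖) ^ 2)⁻¹) (‖F‖ * ‖G‖) :=
    hasDerivAt_inv hne
  have h4 : HasFDerivAt (fun v : E => (‖v‖ * ‖G‖)⁻¹)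
      ((-((‖F‖ * ‖G‖) ^ 2)⁻¹) • (‖G‖ • ((‖F‖)⁻¹ • innerSL ℝ F))) F := by
    have h := HasDerivAt.comp_hasFDerivAt (f := fun v : E => ‖v‖ * ‖G‖) F hinv h3
    simpa [Function.comp_def] using h
  have hmul := h1.mul h4
  have hdiv : HasFDerivAt (fun v : E => ⟪v, G⟫_ℝ / (‖v‖ * ‖G‖))
      (⟪F, G⟫_ℝ • ((-((‖F‖ * ‖G‖) ^ 2)⁻¹) • (‖G‖ • ((‖F‖)⁻¹ • innerSL ℝ F))) +
        (‖F‖ * ‖G‖)⁻¹ • innerSL ℝ G) F := by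
    have := hmul; simp [div_eq_mul_inv] at this ⊢; exact this
  rw [hdiv.hasGradientAt.gradient, LinearIsometryEquiv.norm_map]
  refine ContinuousLinearMap.opNorm_le_bound _ (by positivity) fun w => ?_
  have hb : |⟪F, G⟫_ℝ| ≤ ‖F‖ * ‖G‖ := abs_real_inner_le_norm F G
  have hbw : |⟪G, w⟫_ℝ| ≤ ‖G‖ * ‖w‖ := abs_real_inner_le_norm G w
  have hbw2 : |⟪F, w⟫_ℝ| ≤ ‖F‖ * ‖w‖ := abs_real_inner_le_norm F w
  simp only [ContinuousLinearMap.add_apply, ContinuousLinearMap.coe_smul', Pi.smul_apply,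
    smul_eq_mul, innerSL_apply_apply, Real.norm_eq_abs]
  calc |⟪F, G⟫_ℝ * (-((‖F‖ * ‖G‖) ^ 2)⁻¹ * (‖G‖ * ((‖F‖)⁻¹ * ⟪F, w⟫_ℝ))) +
        (‖F‖ * ‖G‖)⁻¹ * ⟪G, w⟫_ℝ|
      ≤ |⟪F, G⟫_ℝ| * (((‖F‖ * ‖G‖) ^ 2)⁻¹ * (‖G‖ * ((‖F‖)⁻¹ * |⟪F, w⟫_ℝ|))) +
        (‖F‖ * ‖G‖)⁻¹ * |⟪G, w⟫_ℝ| := by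
        refine (abs_add_le _ _).trans ?_
        gcongr
        · rw [abs_mul]
          gcongr
          rw [abs_mul, abs_mul, abs_mul, abs_neg, abs_inv, abs_inv,
            abs_of_nonneg (by positivity : (0:ℝ) ≤ (‖F‖ * ‖G‖) ^ 2),
            abs_of_nonneg hGp.le, abs_of_nonneg hFp.le]
        · rw [abs_mul, abs_inv, abs_of_nonneg (by positivity : (0:ℝ) ≤ ‖F‖ * ‖G‖)]
    _ ≤ (‖F‖ * ‖G‖) * (((‖F‖ * ‖G‖) ^ 2)⁻¹ * (‖G‖ * ((‖F‖)⁻¹ * (‖F‖ * ‖w‖)))) +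
        (‖F‖ * ‖G‖)⁻¹ * (‖G‖ * ‖w‖) := by gcongr
    _ = 2 / ‖F‖ * ‖w‖ := by field_simp; ring
end

section
/- Let E be a finite-dimensional real inner product space, let M > 0, and let F, G ∈ E be nonzero vectors with ‖F‖ ≥ M. Then the gradient of the map F ↦ Sim(F, G) at F satisfies ‖∇_F Sim(F, G)‖ ≤ 2/M. -/
open scoped InnerProductSpace

/-- For nonzero `F, G` in a finite-dimensional real inner product space
with `‖F‖ ≥ M > 0`, the gradient of the cosine-similarity map at `F` has norm at most `2 / M`. -/
theorem stmt_2 {E : Type*} [NormedAddCommGroup E] [InnerProductSpace ℝ E]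
    [FiniteDimensional ℝ E] (M : ℝ) (hM : 0 < M) (F G : E) (hF : F ≠ 0) (hG : G ≠ 0)
    (hFM : M ≤ ‖F‖) :
    ‖gradient (fun v : E => ⟪v, G⟫_ℝ / (‖v‖ * ‖G‖)) F‖ ≤ 2 / M := by
  have hFn : (0:ℝ) < ‖F‖ := norm_pos_iff.2 hF
  have hGn : (0:ℝ) < ‖G‖ := norm_pos_iff.2 hG
  set g : E := (‖F‖ * ‖G‖)⁻¹ • G - (⟪F, G⟫_ℝ / (‖F‖ ^ 3 * ‖G‖)) • F with hg
  -- derivative of the norm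
  have hnormsq : HasFDerivAt (fun v : E => ‖v‖ ^ 2) (2 • innerSL ℝ F) F := by
    simpa using (hasFDerivAt_id F).norm_sq
  have hnorm : HasFDerivAt (fun v : E => ‖v‖) (‖F‖⁻¹ • innerSL ℝ F) F := by
    have h2 := hnormsq.sqrt (by positivity)
    have heq : (fun v : E => Real.sqrt (‖v‖ ^ 2)) = fun v : E => ‖v‖ := by
      funext v; exact Real.sqrt_sq (norm_nonneg v)
    rw [heq] at h2
    convert h2 using 1
    rw [Real.sqrt_sq (norm_nonneg F)]
    ext w
    simp [smul_smul]
    ring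
  have hden : HasFDerivAt (fun v : E => (‖v‖ * ‖G‖)⁻¹)
      ((-((‖F‖ * ‖G‖) ^ 2)⁻¹) • (‖G‖ • (‖F‖⁻¹ • innerSL ℝ F))) F :=
    (hasDerivAt_inv (by positivity)).comp_hasFDerivAt F (hnorm.mul_const ‖G‖)
  have hinner : HasFDerivAt (fun v : E => ⟪v, G⟫_ℝ) (innerSL ℝ G) F := by
    have := (innerSL ℝ G).hasFDerivAt (x := F)
    refine this.congr_of_eventuallyEq (Filter.Eventually.of_forall fun v => ?_)
    simp [real_inner_comm]
  have hf : HasFDerivAt (fun v : E => ⟪v, G⟫_ℝ / (‖v‖ * ‖G‖))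
      (⟪F, G⟫_ℝ • ((-((‖F‖ * ‖G‖) ^ 2)⁻¹) • (‖G‖ • (‖F‖⁻¹ • innerSL ℝ F)))
        + (‖F‖ * ‖G‖)⁻¹ • innerSL ℝ G) F := by
    have h := hinner.mul hden
    simp only [Pi.mul_def] at h
    simpa only [div_eq_mul_inv] using h
  have hgrad : HasGradientAt (fun v : E => ⟪v, G⟫_ℝ / (‖v‖ * ‖G‖)) g F := by
    rw [hasGradientAt_iff_hasFDerivAt]
    refine (hf.congr_fderiv ?_)
    symm
    ext w
    simp only [InnerProductSpace.toDual_apply_apply, hg, inner_sub_left, inner_smul_left,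
      ContinuousLinearMap.add_apply, ContinuousLinearMap.smul_apply, innerSL_apply_apply,
      RCLike.star_def, starRingEnd_apply, star_trivial, smul_eq_mul]
    rw [real_inner_comm w G]
    field_simp
    ring
  rw [hgrad.gradient]
  have hbound : ‖g‖ ≤ 2 / ‖F‖ := by
    have h1 : ‖(‖F‖ * ‖G‖)⁻¹ • G‖ = 1 / ‖F‖ := by
      rw [norm_smul, norm_inv, norm_mul, norm_norm, norm_norm]; field_simp
    have h2 : ‖(⟪F, G⟫_ℝ / (‖F‖ ^ 3 * ‖G‖)) • F‖ ≤ 1 / ‖F‖ := by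
      rw [norm_smul]
      have hc : |⟪F, G⟫_ℝ| ≤ ‖F‖ * ‖G‖ := abs_real_inner_le_norm F G
      rw [Real.norm_eq_abs, abs_div]
      rw [abs_of_pos (by positivity : (0:ℝ) < ‖F‖ ^ 3 * ‖G‖)]
      rw [div_mul_eq_mul_div, div_le_div_iff₀ (by positivity) (by positivity)]
      calc |⟪F, G⟫_ℝ| * ‖F‖ * ‖F‖ ≤ (‖F‖ * ‖G‖) * ‖F‖ * ‖F‖ := by
            gcongr
        _ = 1 * (‖F‖ ^ 3 * ‖G‖) := by ring
    calc ‖g‖ ≤ ‖(‖F‖ * ‖G‖)⁻¹ • G‖ + ‖(⟪F, G⟫_ℝ / (‖F‖ ^ 3 * ‖G‖)) • F‖ := norm_sub_le _ _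
      _ ≤ 1 / ‖F‖ + 1 / ‖F‖ := by rw [h1]; gcongr
      _ = 2 / ‖F‖ := by ring
  exact hbound.trans (by gcongr)
end

section
/- Let E be a finite-dimensional real inner product space, let T ≥ 3, let M > 0, and let F = (F₁, …, F_T) ∈ E^T be a tuple of vectors with ‖F_s‖ ≥ M for every s. Then for each fixed index t, the function mapping the single vector F_t (with all other components held fixed) to L_temporal(F₁, …, F_T) is differentiable at F_t, and its gradient satisfies ‖∇_{F_t} L_temporal‖ ≤ 16(T−2)/(M(T−1)), and in particular ‖∇_{F_t} L_temporal‖ ≤ 16/M. -/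
open scoped InnerProductSpace

/-- Cosine similarity `Sim(F, G) = ⟪F, G⟫ / (‖F‖ * ‖G‖)`. -/
noncomputable def sim {E : Type*} [NormedAddCommGroup E] [InnerProductSpace ℝ E]
    (F G : E) : ℝ :=
  ⟪F, G⟫_ℝ / (‖F‖ * ‖G‖)

/-- Temporal consistency loss of a tuple `F = (F₁, …, F_T)` (here `0`-indexed as
`F 0, …, F (T-1)`, so the `1`-based sum `∑_{t=2}^{T-1}` becomes a sum over
`t ∈ Ico 1 (T-1)`):
`L(F) = (1/(T-1)) · ∑ (Sim(F_t, F_{t+1}) − Sim(F_{t−1}, F_t))²`. -/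
noncomputable def temporalLoss {E : Type*} [NormedAddCommGroup E] [InnerProductSpace ℝ E]
    (T : ℕ) (hT : 0 < T) (F : Fin T → E) : ℝ :=
  (1 / ((T : ℝ) - 1)) * ∑ t ∈ Finset.Ico 1 (T - 1),
    (sim (F ⟨t % T, Nat.mod_lt _ hT⟩) (F ⟨(t + 1) % T, Nat.mod_lt _ hT⟩)
      - sim (F ⟨(t - 1) % T, Nat.mod_lt _ hT⟩) (F ⟨t % T, Nat.mod_lt _ hT⟩)) ^ 2

theorem sim_comm' {E : Type*} [NormedAddCommGroup E] [InnerProductSpace ℝ E]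
    (F G : E) : sim F G = sim G F := by
  simp [sim, real_inner_comm, mul_comm]

theorem abs_sim_le_one' {E : Type*} [NormedAddCommGroup E] [InnerProductSpace ℝ E]
    (F G : E) (hF : F ≠ 0) (hG : G ≠ 0) : |sim F G| ≤ 1 := by
  have hFn : (0:ℝ) < ‖F‖ := norm_pos_iff.2 hF
  have hGn : (0:ℝ) < ‖G‖ := norm_pos_iff.2 hG
  rw [sim, abs_div, abs_of_pos (mul_pos hFn hGn), div_le_one (mul_pos hFn hGn)]
  exact abs_real_inner_le_norm F G

theorem hasFDerivAt_norm_my {E : Type*} [NormedAddCommGroup E] [InnerProductSpace ℝ E]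
    (x : E) (hx : x ≠ 0) :
    HasFDerivAt (fun v : E => ‖v‖) (‖x‖⁻¹ • innerSL ℝ x) x := by
  have h1 : HasFDerivAt (fun v : E => ⟪v, v⟫_ℝ)
      ((fderivInnerCLM ℝ (x, x)).comp
        ((ContinuousLinearMap.id ℝ E).prod (ContinuousLinearMap.id ℝ E))) x :=
    (hasFDerivAt_id x).inner ℝ (hasFDerivAt_id x)
  have hq : ⟪x, x⟫_ℝ ≠ 0 := by
    simpa [real_inner_self_eq_norm_sq] using pow_ne_zero 2 (norm_ne_zero_iff.2 hx)
  have h2 := HasDerivAt.comp_hasFDerivAt_of_eq x (Real.hasDerivAt_sqrt hq) h1 rfl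
  have hfun : (Real.sqrt ∘ fun v : E => ⟪v, v⟫_ℝ) = fun v : E => ‖v‖ := by
    funext v
    simp only [Function.comp_apply, real_inner_self_eq_norm_sq]
    exact Real.sqrt_sq (norm_nonneg v)
  rw [hfun] at h2
  refine h2.congr_fderiv ?_
  have hs : Real.sqrt ⟪x, x⟫_ℝ = ‖x‖ := by
    rw [real_inner_self_eq_norm_sq]; exact Real.sqrt_sq (norm_nonneg x)
  ext h
  simp [hs, fderivInnerCLM_apply, real_inner_comm x h]
  field_simp
  rw [one_add_one_eq_two, mul_comm]

/-- Derivative of `v ↦ sim v G` at `x`. -/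
noncomputable def simDeriv {E : Type*} [NormedAddCommGroup E] [InnerProductSpace ℝ E]
    (x G : E) : E →L[ℝ] ℝ :=
  (‖x‖ * ‖G‖)⁻¹ • innerSL ℝ G - (⟪x, G⟫_ℝ / (‖x‖ ^ 3 * ‖G‖)) • innerSL ℝ x

theorem hasFDerivAt_sim_left {E : Type*} [NormedAddCommGroup E] [InnerProductSpace ℝ E]
    (x G : E) (hx : x ≠ 0) (hG : G ≠ 0) :
    HasFDerivAt (fun v : E => sim v G) (simDeriv x G) x := by
  have hxn : ‖x‖ ≠ 0 := norm_ne_zero_iff.2 hx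
  have hGn : ‖G‖ ≠ 0 := norm_ne_zero_iff.2 hG
  have hu : HasFDerivAt (fun v : E => ⟪v, G⟫_ℝ) (innerSL ℝ G) x := by
    have h := (innerSL ℝ G).hasFDerivAt (x := x)
    have : (fun v : E => ⟪v, G⟫_ℝ) = fun v : E => innerSL ℝ G v := by
      funext v; simp [real_inner_comm]
    rw [this]; exact h
  have hw : HasFDerivAt (fun v : E => ‖v‖ * ‖G‖) (‖G‖ • (‖x‖⁻¹ • innerSL ℝ x)) x := by
    simpa using (hasFDerivAt_norm_my x hx).mul_const ‖G‖
  have hwx : ‖x‖ * ‖G‖ ≠ 0 := mul_ne_zero hxn hGn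
  have hw2 := HasDerivAt.comp_hasFDerivAt_of_eq x (hasDerivAt_inv hwx) hw rfl
  have hmul := hu.mul hw2
  have hfun : (fun v : E => ⟪v, G⟫_ℝ * (Inv.inv ∘ fun v : E => ‖v‖ * ‖G‖) v)
      = fun v : E => sim v G := by
    funext v; simp [sim, div_eq_mul_inv]
  rw [show ((fun v : E => ⟪v, G⟫_ℝ) * ((fun y : ℝ => y⁻¹) ∘ fun v : E => ‖v‖ * ‖G‖)) = fun v : E => sim v G from hfun] at hmul
  refine hmul.congr_fderiv ?_
  ext h
  simp only [simDeriv, ContinuousLinearMap.coe_sub', Pi.sub_apply,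
    ContinuousLinearMap.coe_smul', Pi.smul_apply, smul_eq_mul, innerSL_apply_apply,
    ContinuousLinearMap.add_apply, Function.comp_apply, neg_smul, ContinuousLinearMap.smul_apply, ContinuousLinearMap.neg_apply,
    ContinuousLinearMap.coe_smul]
  field_simp
  ring

theorem simDeriv_norm_le {E : Type*} [NormedAddCommGroup E] [InnerProductSpace ℝ E]
    (x G : E) (hx : x ≠ 0) (hG : G ≠ 0) : ‖simDeriv x G‖ ≤ 2 / ‖x‖ := by
  have hxn : (0:ℝ) < ‖x‖ := norm_pos_iff.2 hx
  have hGn : (0:ℝ) < ‖G‖ := norm_pos_iff.2 hG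
  apply ContinuousLinearMap.opNorm_le_bound _ (by positivity)
  intro h
  simp only [simDeriv, ContinuousLinearMap.coe_sub', Pi.sub_apply,
    ContinuousLinearMap.coe_smul', Pi.smul_apply, smul_eq_mul, innerSL_apply_apply]
  have c1 : |⟪G, h⟫_ℝ| ≤ ‖G‖ * ‖h‖ := abs_real_inner_le_norm G h
  have c2 : |⟪x, h⟫_ℝ| ≤ ‖x‖ * ‖h‖ := abs_real_inner_le_norm x h
  have c3 : |⟪x, G⟫_ℝ| ≤ ‖x‖ * ‖G‖ := abs_real_inner_le_norm x G
  have hh : (0:ℝ) ≤ ‖h‖ := norm_nonneg h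
  calc ‖(‖x‖ * ‖G‖)⁻¹ * ⟪G, h⟫_ℝ - ⟪x, G⟫_ℝ / (‖x‖ ^ 3 * ‖G‖) * ⟪x, h⟫_ℝ‖
      ≤ ‖(‖x‖ * ‖G‖)⁻¹ * ⟪G, h⟫_ℝ‖ + ‖⟪x, G⟫_ℝ / (‖x‖ ^ 3 * ‖G‖) * ⟪x, h⟫_ℝ‖ :=
        norm_sub_le _ _
    _ ≤ ‖h‖ / ‖x‖ + ‖h‖ / ‖x‖ := by
        apply add_le_add
        · rw [Real.norm_eq_abs, abs_mul, abs_of_nonneg (by positivity : (0:ℝ) ≤ (‖x‖*‖G‖)⁻¹)]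
          rw [div_eq_mul_inv, mul_comm ‖h‖]
          calc (‖x‖ * ‖G‖)⁻¹ * |⟪G, h⟫_ℝ| ≤ (‖x‖ * ‖G‖)⁻¹ * (‖G‖ * ‖h‖) :=
                mul_le_mul_of_nonneg_left c1 (by positivity)
            _ = ‖x‖⁻¹ * ‖h‖ := by field_simp
        · rw [Real.norm_eq_abs, abs_mul, abs_div,
            abs_of_nonneg (by positivity : (0:ℝ) ≤ ‖x‖ ^ 3 * ‖G‖)]
          calc |⟪x, G⟫_ℝ| / (‖x‖ ^ 3 * ‖G‖) * |⟪x, h⟫_ℝ|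
              ≤ (‖x‖ * ‖G‖) / (‖x‖ ^ 3 * ‖G‖) * (‖x‖ * ‖h‖) :=
                mul_le_mul (by gcongr) c2 (abs_nonneg _) (by positivity)
            _ = ‖h‖ / ‖x‖ := by field_simp
    _ = 2 / ‖x‖ * ‖h‖ := by field_simp; ring

/-- Derivative (in `v`) of `v ↦ sim ((update F t v) i) ((update F t v) j)` at `v = F t`. -/
noncomputable def pairDeriv {E : Type*} [NormedAddCommGroup E] [InnerProductSpace ℝ E]
    {T : ℕ} (F : Fin T → E) (t i j : Fin T) : E →L[ℝ] ℝ :=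
  if t = i then simDeriv (F t) (F j) else if t = j then simDeriv (F t) (F i) else 0

theorem pair_hasFDerivAt {E : Type*} [NormedAddCommGroup E] [InnerProductSpace ℝ E]
    {T : ℕ} (F : Fin T → E) (t i j : Fin T) (hne : ∀ s, F s ≠ 0) (hij : i ≠ j) :
    HasFDerivAt (fun v : E => sim (Function.update F t v i) (Function.update F t v j))
      (pairDeriv F t i j) (F t) := by
  unfold pairDeriv
  by_cases h1 : t = i
  · subst h1
    rw [if_pos rfl]
    have hfun : (fun v : E => sim (Function.update F t v t) (Function.update F t v j))
        = fun v => sim v (F j) := by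
      funext v
      rw [Function.update_self, Function.update_of_ne (Ne.symm hij)]
    rw [hfun]
    exact hasFDerivAt_sim_left (F t) (F j) (hne t) (hne j)
  · rw [if_neg h1]
    by_cases h2 : t = j
    · subst h2
      rw [if_pos rfl]
      have hfun : (fun v : E => sim (Function.update F t v i) (Function.update F t v t))
          = fun v => sim v (F i) := by
        funext v
        rw [Function.update_self, Function.update_of_ne (Ne.symm h1), sim_comm']
      rw [hfun]
      exact hasFDerivAt_sim_left (F t) (F i) (hne t) (hne i)
    · rw [if_neg h2]
      have hfun : (fun v : E => sim (Function.update F t v i) (Function.update F t v j))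
          = fun _ => sim (F i) (F j) := by
        funext v
        rw [Function.update_of_ne (Ne.symm h1), Function.update_of_ne (Ne.symm h2)]
      rw [hfun]
      exact hasFDerivAt_const _ _

theorem pairDeriv_norm_le {E : Type*} [NormedAddCommGroup E] [InnerProductSpace ℝ E]
    {T : ℕ} (F : Fin T → E) (t i j : Fin T) (M : ℝ) (hM : 0 < M)
    (hF : ∀ s, M ≤ ‖F s‖) (hne : ∀ s, F s ≠ 0) : ‖pairDeriv F t i j‖ ≤ 2 / M := by
  have key : ∀ G : E, G ≠ 0 → ‖simDeriv (F t) G‖ ≤ 2 / M := by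
    intro G hG
    calc ‖simDeriv (F t) G‖ ≤ 2 / ‖F t‖ := simDeriv_norm_le (F t) G (hne t) hG
      _ ≤ 2 / M := by gcongr; · norm_num; · exact hF t
  unfold pairDeriv
  split_ifs with h1 h2
  · exact key (F j) (hne j)
  · exact key (F i) (hne i)
  · simp [le_of_lt (by positivity : (0:ℝ) < 2 / M)]

/-- For `T ≥ 3`, `M > 0` and a tuple `F ∈ E^T` with `‖F_s‖ ≥ M` for all
`s`, for each fixed index `t` the map sending the single vector `F_t` (others fixed) to
the temporal consistency loss is differentiable at `F t`, and its gradient satisfies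
`‖∇_{F_t} L‖ ≤ 16(T−2)/(M(T−1))`, and in particular `‖∇_{F_t} L‖ ≤ 16/M`. -/
theorem stmt_4 {E : Type*} [NormedAddCommGroup E] [InnerProductSpace ℝ E]
    [FiniteDimensional ℝ E] (T : ℕ) (hT : 3 ≤ T) (M : ℝ) (hM : 0 < M)
    (F : Fin T → E) (hF : ∀ s, M ≤ ‖F s‖) (t : Fin T) :
    DifferentiableAt ℝ
        (fun v : E => temporalLoss T (by omega) (Function.update F t v)) (F t) ∧
      ‖gradient (fun v : E => temporalLoss T (by omega) (Function.update F t v)) (F t)‖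
          ≤ 16 * ((T : ℝ) - 2) / (M * ((T : ℝ) - 1)) ∧
      ‖gradient (fun v : E => temporalLoss T (by omega) (Function.update F t v)) (F t)‖
          ≤ 16 / M := by
  have hT0 : 0 < T := by omega
  have hne : ∀ s, F s ≠ 0 := fun s => norm_pos_iff.1 (hM.trans_le (hF s))
  set I0 : ℕ → Fin T := fun s => ⟨(s - 1) % T, Nat.mod_lt _ hT0⟩ with hI0
  set I1 : ℕ → Fin T := fun s => ⟨s % T, Nat.mod_lt _ hT0⟩ with hI1
  set I2 : ℕ → Fin T := fun s => ⟨(s + 1) % T, Nat.mod_lt _ hT0⟩ with hI2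
  set D : ℕ → E →L[ℝ] ℝ := fun s =>
    (2 * (sim (F (I1 s)) (F (I2 s)) - sim (F (I0 s)) (F (I1 s)))) •
      (pairDeriv F t (I1 s) (I2 s) - pairDeriv F t (I0 s) (I1 s)) with hD
  have hterm : ∀ s ∈ Finset.Ico 1 (T - 1),
      HasFDerivAt (fun v : E =>
        (sim (Function.update F t v (I1 s)) (Function.update F t v (I2 s))
          - sim (Function.update F t v (I0 s)) (Function.update F t v (I1 s))) ^ 2)
        (D s) (F t) := by
    intro s hs
    obtain ⟨hs1, hs2⟩ := Finset.mem_Ico.1 hs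
    have ne12 : I1 s ≠ I2 s := by
      apply Fin.ne_of_val_ne
      simp only [hI1, hI2]
      rw [Nat.mod_eq_of_lt (by omega), Nat.mod_eq_of_lt (by omega)]
      omega
    have ne01 : I0 s ≠ I1 s := by
      apply Fin.ne_of_val_ne
      simp only [hI0, hI1]
      rw [Nat.mod_eq_of_lt (by omega), Nat.mod_eq_of_lt (by omega)]
      omega
    have h12 := pair_hasFDerivAt F t (I1 s) (I2 s) hne ne12
    have h01 := pair_hasFDerivAt F t (I0 s) (I1 s) hne ne01
    have hΔ := h12.sub h01
    have hmul := hΔ.mul hΔ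
    have hself : Function.update F t (F t) = F := Function.update_eq_self t F
    convert hmul using 1
    · rfl
    · rfl
    · funext v; rw [pow_two]; rfl
    · rw [hD]
      simp only [Pi.sub_apply, hself]
      rw [two_mul, add_smul]
  have hsum := HasFDerivAt.sum hterm
  have hmain := hsum.const_mul (1 / ((T : ℝ) - 1))
  have hfun : (fun v : E => temporalLoss T (by omega : 0 < T) (Function.update F t v))
      = fun v : E => (1 / ((T : ℝ) - 1)) * ∑ s ∈ Finset.Ico 1 (T - 1),
          (sim (Function.update F t v (I1 s)) (Function.update F t v (I2 s))
            - sim (Function.update F t v (I0 s)) (Function.update F t v (I1 s))) ^ 2 := rfl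
  simp only [Finset.sum_apply] at hmain
  rw [← hfun] at hmain
  have hdiff : DifferentiableAt ℝ
      (fun v : E => temporalLoss T (by omega : 0 < T) (Function.update F t v)) (F t) :=
    hmain.differentiableAt
  have hDle : ∀ s ∈ Finset.Ico 1 (T - 1), ‖D s‖ ≤ 16 / M := by
    intro s hs
    rw [hD]
    have hd1 : |sim (F (I1 s)) (F (I2 s))| ≤ 1 := abs_sim_le_one' _ _ (hne _) (hne _)
    have hd2 : |sim (F (I0 s)) (F (I1 s))| ≤ 1 := abs_sim_le_one' _ _ (hne _) (hne _)
    have hp1 : ‖pairDeriv F t (I1 s) (I2 s)‖ ≤ 2 / M := pairDeriv_norm_le F t _ _ M hM hF hne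
    have hp2 : ‖pairDeriv F t (I0 s) (I1 s)‖ ≤ 2 / M := pairDeriv_norm_le F t _ _ M hM hF hne
    calc ‖(2 * (sim (F (I1 s)) (F (I2 s)) - sim (F (I0 s)) (F (I1 s)))) •
          (pairDeriv F t (I1 s) (I2 s) - pairDeriv F t (I0 s) (I1 s))‖
        = |2 * (sim (F (I1 s)) (F (I2 s)) - sim (F (I0 s)) (F (I1 s)))| *
          ‖pairDeriv F t (I1 s) (I2 s) - pairDeriv F t (I0 s) (I1 s)‖ := by
          rw [← Real.norm_eq_abs]
          exact norm_smul (α := ℝ) (β := E →L[ℝ] ℝ) _ _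
      _ ≤ (2 * 2) * (2 / M + 2 / M) := by
          apply mul_le_mul _ ((norm_sub_le _ _).trans (add_le_add hp1 hp2)) (norm_nonneg _)
            (by positivity)
          rw [abs_mul, abs_two]
          have := (abs_sub _ _).trans (add_le_add hd1 hd2)
          nlinarith [abs_sub_abs_le_abs_sub (sim (F (I1 s)) (F (I2 s)))
            (sim (F (I0 s)) (F (I1 s))), abs_sub (sim (F (I1 s)) (F (I2 s)))
            (sim (F (I0 s)) (F (I1 s)))]
      _ = 16 / M := by field_simp; ring
  have hT3 : (3:ℝ) ≤ (T:ℝ) := by exact_mod_cast hT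
  have hTpos : (0:ℝ) < (T:ℝ) - 1 := by linarith
  have hcard : (Finset.Ico 1 (T - 1)).card = T - 2 := by
    rw [Nat.card_Ico]; omega
  have hsumnorm : ‖∑ s ∈ Finset.Ico 1 (T - 1), D s‖ ≤ ((T:ℝ) - 2) * (16 / M) := by
    calc ‖∑ s ∈ Finset.Ico 1 (T - 1), D s‖ ≤ ∑ s ∈ Finset.Ico 1 (T - 1), ‖D s‖ :=
          norm_sum_le _ _
      _ ≤ ∑ _s ∈ Finset.Ico 1 (T - 1), (16 / M) := Finset.sum_le_sum hDle
      _ = ((T - 2 : ℕ) : ℝ) * (16 / M) := by rw [Finset.sum_const, hcard]; simp [mul_comm]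
      _ = ((T:ℝ) - 2) * (16 / M) := by
          rw [Nat.cast_sub (by omega)]; norm_num
  have hgradnorm : ‖gradient
      (fun v : E => temporalLoss T (by omega : 0 < T) (Function.update F t v)) (F t)‖
      = ‖fderiv ℝ (fun v : E => temporalLoss T (by omega : 0 < T) (Function.update F t v)) (F t)‖ :=
    (InnerProductSpace.toDual ℝ E).symm.norm_map _
  have hfd := hmain.fderiv
  have hb1 : ‖gradient
      (fun v : E => temporalLoss T (by omega : 0 < T) (Function.update F t v)) (F t)‖
      ≤ 16 * ((T : ℝ) - 2) / (M * ((T : ℝ) - 1)) := by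
    rw [hgradnorm, hfd, norm_smul, Real.norm_eq_abs,
      abs_of_pos (one_div_pos.2 hTpos)]
    calc (1 / ((T:ℝ) - 1)) * ‖∑ s ∈ Finset.Ico 1 (T - 1), D s‖
        ≤ (1 / ((T:ℝ) - 1)) * (((T:ℝ) - 2) * (16 / M)) := by
          apply mul_le_mul_of_nonneg_left hsumnorm (le_of_lt (one_div_pos.2 hTpos))
      _ = 16 * ((T : ℝ) - 2) / (M * ((T : ℝ) - 1)) := by
          field_simp
  refine ⟨hdiff, hb1, hb1.trans ?_⟩
  rw [div_le_div_iff₀ (mul_pos hM hTpos) hM]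
  nlinarith
end

section
/- Let M, L, d be positive natural numbers, let X ∈ ℝ^{M×d} with ‖X‖_F ≤ √d, let Z, Z* ∈ ℝ^{L×d}, W_Q, W_K, W_V ∈ ℝ^{d×d}, and let σ : ℝ^{M×L} → ℝ^{M×L} be Lipschitz with constant L_σ with respect to the Frobenius norm. Set Q = X·W_Q, K = Z·W_K, K* = Z*·W_K, V* = Z*·W_V, A = Q·Kᵀ/√d, B = Q·(K*)ᵀ/√d, and ΔZ = Z − Z*. Then ‖( σ(A) − σ(B) )·V*‖_F ≤ L_σ·‖W_Q‖₂·‖W_K‖₂·‖V*‖₂·‖ΔZ‖_F. -/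
open Matrix

/-- Frobenius norm of a real matrix: `‖A‖_F = √(∑ i ∑ j A i j ²)`. -/
noncomputable def frobNorm {m n : Type*} [Fintype m] [Fintype n] (A : Matrix m n ℝ) : ℝ :=
  Real.sqrt (∑ i, ∑ j, (A i j) ^ 2)

/-- Spectral (`ℓ² → ℓ²` operator) norm of a real matrix. -/
noncomputable def specNorm {m n : Type*} [Fintype m] [Fintype n] [DecidableEq n]
    (A : Matrix m n ℝ) : ℝ :=
  ‖LinearMap.toContinuousLinearMap (Matrix.toEuclideanLin A)‖

open scoped Matrix.Norms.L2Operator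

section Aux
set_option linter.unusedSectionVars false
set_option maxHeartbeats 1000000

variable {m n p : Type*} [Fintype m] [Fintype n] [Fintype p] [DecidableEq m] [DecidableEq n] [DecidableEq p]

lemma specNorm_eq (A : Matrix m n ℝ) : specNorm A = ‖A‖ := rfl

lemma frob_nonneg (A : Matrix m n ℝ) : 0 ≤ frobNorm A := Real.sqrt_nonneg _

lemma frob_sq (A : Matrix m n ℝ) : frobNorm A ^ 2 = ∑ i, ∑ j, (A i j) ^ 2 := by
  rw [frobNorm, Real.sq_sqrt]
  positivity

lemma euclid_norm_sq (x : EuclideanSpace ℝ n) : ‖x‖ ^ 2 = ∑ j, (x j) ^ 2 := by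
  rw [EuclideanSpace.norm_eq, Real.sq_sqrt (by positivity)]
  simp [Real.norm_eq_abs, sq_abs]

set_option linter.unusedSectionVars false
set_option maxHeartbeats 1000000

lemma frob_transpose (A : Matrix m n ℝ) : frobNorm Aᵀ = frobNorm A := by
  rw [frobNorm, frobNorm, Finset.sum_comm]
  rfl

lemma spec_transpose (A : Matrix m n ℝ) : specNorm Aᵀ = specNorm A := by
  have h : Aᵀ = Aᴴ := by ext i j; simp [conjTranspose_apply]
  rw [specNorm_eq, specNorm_eq, h, Matrix.l2_opNorm_conjTranspose]

lemma spec_mul_le (A : Matrix m n ℝ) (B : Matrix n p ℝ) :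
    specNorm (A * B) ≤ specNorm A * specNorm B := by
  simpa only [specNorm_eq] using Matrix.l2_opNorm_mul A B

lemma frob_smul (c : ℝ) (A : Matrix m n ℝ) : frobNorm (c • A) = |c| * frobNorm A := by
  simp only [frobNorm, Matrix.smul_apply, smul_eq_mul, mul_pow, ← Finset.mul_sum]
  rw [Real.sqrt_mul (by positivity), Real.sqrt_sq_eq_abs]

/-- `‖C·V‖_F ≤ ‖C‖_F · ‖V‖₂`. -/
lemma spec_nonneg (A : Matrix m n ℝ) : 0 ≤ specNorm A := norm_nonneg _

lemma frob_mul_spec_le (C : Matrix m n ℝ) (V : Matrix n p ℝ) :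
    frobNorm (C * V) ≤ frobNorm C * specNorm V := by
  have hi : ∀ i, ∑ j, ((C * V) i j) ^ 2 ≤ (∑ j, (C i j) ^ 2) * specNorm V ^ 2 := by
    intro i
    have h1 := Matrix.l2_opNorm_mulVec Vᵀ ((EuclideanSpace.equiv n ℝ).symm (C i))
    have h2 := pow_le_pow_left₀ (norm_nonneg _) h1 2
    have e1 : ∑ j, ((C * V) i j) ^ 2
        = ‖(EuclideanSpace.equiv p ℝ).symm (Vᵀ *ᵥ ((EuclideanSpace.equiv n ℝ).symm (C i)))‖ ^ 2 := by
      rw [euclid_norm_sq]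
      refine Finset.sum_congr rfl fun j _ => ?_
      congr 1
      simp [Matrix.mul_apply, Matrix.mulVec, dotProduct, mul_comm]
    have e2 : ‖((EuclideanSpace.equiv n ℝ).symm (C i))‖ ^ 2 = ∑ j, (C i j) ^ 2 := by
      rw [euclid_norm_sq]
      exact Finset.sum_congr rfl fun j _ => rfl
    have e3 : ‖Vᵀ‖ = specNorm V := by rw [← specNorm_eq, spec_transpose]
    rw [e1]
    calc ‖(EuclideanSpace.equiv p ℝ).symm (Vᵀ *ᵥ ((EuclideanSpace.equiv n ℝ).symm (C i)))‖ ^ 2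
        ≤ (‖Vᵀ‖ * ‖((EuclideanSpace.equiv n ℝ).symm (C i))‖) ^ 2 := h2
      _ = ‖((EuclideanSpace.equiv n ℝ).symm (C i))‖ ^ 2 * ‖Vᵀ‖ ^ 2 := by ring
      _ = (∑ j, (C i j) ^ 2) * specNorm V ^ 2 := by rw [e2, e3]
  have key : frobNorm (C * V) ^ 2 ≤ (frobNorm C * specNorm V) ^ 2 := by
    rw [frob_sq, mul_pow, frob_sq, Finset.sum_mul]
    exact Finset.sum_le_sum fun i _ => hi i
  calc frobNorm (C * V) = Real.sqrt (frobNorm (C * V) ^ 2) := by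
        rw [Real.sqrt_sq (frob_nonneg _)]
    _ ≤ Real.sqrt ((frobNorm C * specNorm V) ^ 2) := Real.sqrt_le_sqrt key
    _ = frobNorm C * specNorm V :=
        Real.sqrt_sq (mul_nonneg (frob_nonneg _) (spec_nonneg _))

/-- `‖W·C‖_F ≤ ‖W‖₂ · ‖C‖_F`. -/
lemma spec_mul_frob_le (W : Matrix m n ℝ) (C : Matrix n p ℝ) :
    frobNorm (W * C) ≤ specNorm W * frobNorm C := by
  have := frob_mul_spec_le Cᵀ Wᵀ
  rw [← Matrix.transpose_mul, frob_transpose, frob_transpose, spec_transpose] at this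
  linarith

/-- spectral ≤ Frobenius. -/
lemma spec_le_frob (A : Matrix m n ℝ) : specNorm A ≤ frobNorm A := by
  apply ContinuousLinearMap.opNorm_le_bound _ (frob_nonneg A)
  intro x
  have hx : (LinearMap.toContinuousLinearMap (Matrix.toEuclideanLin A)) x
      = (EuclideanSpace.equiv m ℝ).symm (A *ᵥ x) := rfl
  rw [hx]
  have h2 : ‖(EuclideanSpace.equiv m ℝ).symm (A *ᵥ x)‖ ^ 2 ≤ (frobNorm A * ‖x‖) ^ 2 := by
    rw [euclid_norm_sq, mul_pow, frob_sq, Finset.sum_mul]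
    apply Finset.sum_le_sum
    intro i _
    have : ((EuclideanSpace.equiv m ℝ).symm (A *ᵥ x) i) = ∑ j, A i j * x j := rfl
    rw [this]
    calc (∑ j, A i j * x j) ^ 2
        ≤ (∑ j, (A i j) ^ 2) * (∑ j, (x j) ^ 2) :=
          Finset.sum_mul_sq_le_sq_mul_sq Finset.univ (fun j => A i j) (fun j => x j)
      _ = (∑ j, (A i j) ^ 2) * ‖x‖ ^ 2 := by rw [euclid_norm_sq]
  nlinarith [norm_nonneg ((EuclideanSpace.equiv m ℝ).symm (A *ᵥ x)), mul_nonneg (frob_nonneg A) (norm_nonneg x)]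

end Aux

set_option maxHeartbeats 1000000 in
/-- (Bound on Term A.) With `‖X‖_F ≤ √d`, `σ` Lipschitz with constant
`L_σ` in Frobenius norm, `Q = X·W_Q`, `K = Z·W_K`, `K* = Z*·W_K`, `V* = Z*·W_V`,
`A = Q·Kᵀ/√d`, `B = Q·(K*)ᵀ/√d`, and `ΔZ = Z − Z*`:
`‖(σ(A) − σ(B))·V*‖_F ≤ L_σ·‖W_Q‖₂·‖W_K‖₂·‖V*‖₂·‖ΔZ‖_F`. -/
theorem stmt_14 (M L d : ℕ) (hM : 0 < M) (hL : 0 < L) (hd : 0 < d)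
    (X : Matrix (Fin M) (Fin d) ℝ) (hX : frobNorm X ≤ Real.sqrt d)
    (Z Zstar : Matrix (Fin L) (Fin d) ℝ)
    (WQ WK WV : Matrix (Fin d) (Fin d) ℝ)
    (σ : Matrix (Fin M) (Fin L) ℝ → Matrix (Fin M) (Fin L) ℝ)
    (Lσ : ℝ) (hLσ : 0 ≤ Lσ)
    (hlip : ∀ A B : Matrix (Fin M) (Fin L) ℝ,
      frobNorm (σ A - σ B) ≤ Lσ * frobNorm (A - B)) :
    frobNorm ((σ ((1 / Real.sqrt d) • (X * WQ * (Z * WK)ᵀ))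
          - σ ((1 / Real.sqrt d) • (X * WQ * (Zstar * WK)ᵀ))) * (Zstar * WV))
      ≤ Lσ * specNorm WQ * specNorm WK * specNorm (Zstar * WV)
          * frobNorm (Z - Zstar) := by
  have hds : (0:ℝ) < Real.sqrt d := Real.sqrt_pos.mpr (by exact_mod_cast hd)
  set A := (1 / Real.sqrt d) • (X * WQ * (Z * WK)ᵀ) with hA
  set B := (1 / Real.sqrt d) • (X * WQ * (Zstar * WK)ᵀ) with hB
  set R := WQ * (((Z - Zstar) * WK)ᵀ) with hR
  have hAB : A - B = (1 / Real.sqrt d) • (X * R) := by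
    rw [hA, hB, hR, ← smul_sub]
    congr 1
    simp [Matrix.sub_mul, Matrix.mul_sub, Matrix.transpose_sub, Matrix.mul_assoc]
  -- bound on spec R
  have hRb : specNorm R ≤ specNorm WQ * specNorm WK * frobNorm (Z - Zstar) := by
    calc specNorm R ≤ specNorm WQ * specNorm (((Z - Zstar) * WK)ᵀ) := spec_mul_le _ _
      _ = specNorm WQ * specNorm ((Z - Zstar) * WK) := by rw [spec_transpose]
      _ ≤ specNorm WQ * (specNorm (Z - Zstar) * specNorm WK) := by
          exact mul_le_mul_of_nonneg_left (spec_mul_le _ _) (spec_nonneg _)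
      _ ≤ specNorm WQ * (frobNorm (Z - Zstar) * specNorm WK) := by
          exact mul_le_mul_of_nonneg_left
            (mul_le_mul_of_nonneg_right (spec_le_frob _) (spec_nonneg _)) (spec_nonneg _)
      _ = specNorm WQ * specNorm WK * frobNorm (Z - Zstar) := by ring
  have hABb : frobNorm (A - B) ≤ specNorm WQ * specNorm WK * frobNorm (Z - Zstar) := by
    rw [hAB, frob_smul]
    rw [abs_of_pos (by positivity)]
    calc (1 / Real.sqrt d) * frobNorm (X * R)
        ≤ (1 / Real.sqrt d) * (frobNorm X * specNorm R) := by
          exact mul_le_mul_of_nonneg_left (frob_mul_spec_le _ _) (by positivity)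
      _ ≤ (1 / Real.sqrt d) * (Real.sqrt d * specNorm R) := by
          exact mul_le_mul_of_nonneg_left
            (mul_le_mul_of_nonneg_right hX (spec_nonneg _)) (by positivity)
      _ = specNorm R := by field_simp
      _ ≤ specNorm WQ * specNorm WK * frobNorm (Z - Zstar) := hRb
  calc frobNorm ((σ A - σ B) * (Zstar * WV))
      ≤ frobNorm (σ A - σ B) * specNorm (Zstar * WV) := frob_mul_spec_le _ _
    _ ≤ (Lσ * frobNorm (A - B)) * specNorm (Zstar * WV) := by
        exact mul_le_mul_of_nonneg_right (hlip A B) (spec_nonneg _)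
    _ ≤ (Lσ * (specNorm WQ * specNorm WK * frobNorm (Z - Zstar))) * specNorm (Zstar * WV) := by
        exact mul_le_mul_of_nonneg_right
          (mul_le_mul_of_nonneg_left hABb hLσ) (spec_nonneg _)
    _ = Lσ * specNorm WQ * specNorm WK * specNorm (Zstar * WV) * frobNorm (Z - Zstar) := by ring
end
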